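/- arXiv:2604.22474 — 5 statements merged into one kernel-verified Lean document; each statement's English description precedes it below -/
import Mathlib

section
/- Let (X,ρ) be a metric space, μ a Borel measure on X all of whose balls have finite positive measure, w : X → [0,∞] a measurable function, and let ν be the measure with dν = w dμ. Suppose there are t ∈ (1,∞) and C₀ ≥ 1 such that the reverse Hölder inequality (μ(B)⁻¹ ∫_B w^t dμ)^{1/t} ≤ C₀ ν(B)/μ(B) holds for every metric ball B of X (with ν(B) finite and positive). Let t' = t/(t−1). Then for every metric ball B, every r ∈ (0,∞) and every measurable function f one has osc_{r,ν}(f;B) ≤ C₀^{1/r} · osc_{rt',μ}(f;B). -/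
open MeasureTheory Metric ENNReal Set

noncomputable section

/-! ### Oscillation -/

/-- The oscillation `osc_{r,μ}(f; E)`. -/
def osc {X : Type*} [MeasurableSpace X] (r : ℝ) (μ : Measure X) (E : Set X) (f : X → ℝ) :
    ℝ≥0∞ :=
  ⨅ c : ℝ, ((μ E)⁻¹ * ∫⁻ x in E, (ENNReal.ofReal |f x - c|) ^ r ∂μ) ^ (1 / r)

/-! ### Metric measure notions -/

/-- A doubling measure: balls have finite positive measure and the doubling condition holds. -/
def IsDoublingMeasure {X : Type*} [MetricSpace X] [MeasurableSpace X] (μ : Measure X) : Prop :=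
  (∀ (x : X) (R : ℝ), 0 < R → 0 < μ (ball x R) ∧ μ (ball x R) < ∞) ∧
  ∃ C : ℝ, ∀ (x : X) (R : ℝ), 0 < R → μ (ball x (2 * R)) ≤ ENNReal.ofReal C * μ (ball x R)

/-- The `A∞` relation between two measures. -/
def AInftyRel {X : Type*} [MetricSpace X] [MeasurableSpace X] (μ ν : Measure X) : Prop :=
  ∃ ε δ : ℝ, 0 < ε ∧ ε < 1 ∧ 0 < δ ∧ δ < 1 ∧
    ∀ (x : X) (R : ℝ), 0 < R → ∀ E : Set X, MeasurableSet E → E ⊆ ball x R →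
      μ E ≤ ENNReal.ofReal ε * μ (ball x R) →
      ν E ≤ ENNReal.ofReal (1 - δ) * ν (ball x R)

/-- Separation/dimension condition: every ball `B(x,R)` contains at most `C (R/r)^d` points
with pairwise distances `≥ r`. -/
def SeparationDim (X : Type*) [MetricSpace X] (d : ℝ) : Prop :=
  ∃ C : ℝ, 0 < C ∧ ∀ (x : X) (r R : ℝ), 0 < r → r ≤ R →
    ∀ s : Finset X, (↑s : Set X) ⊆ ball x R →
      (∀ p ∈ s, ∀ q ∈ s, p ≠ q → r ≤ dist p q) → (s.card : ℝ) ≤ C * (R / r) ^ d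

/-- Ahlfors `d`-regularity of `(X, ρ, ν)`. -/
def IsAhlforsRegular {X : Type*} [MetricSpace X] [MeasurableSpace X]
    (ν : Measure X) (d : ℝ) : Prop :=
  ∃ C : ℝ, 1 ≤ C ∧ ∀ (x : X) (r R : ℝ), 0 < r → r ≤ R →
    ENNReal.ofReal R ≤ ENNReal.ofReal C * EMetric.diam (Set.univ : Set X) →
      ENNReal.ofReal ((R / r) ^ d) * ν (ball x r) ≤ ENNReal.ofReal C * ν (ball x R) ∧
      ν (ball x R) ≤ ENNReal.ofReal C * (ENNReal.ofReal ((R / r) ^ d) * ν (ball x r))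

/-- Lower dimension `d` of `(X, ρ, ν)`. -/
def HasLowerDimension {X : Type*} [MetricSpace X] [MeasurableSpace X]
    (ν : Measure X) (d : ℝ) : Prop :=
  ∃ C : ℝ, 1 ≤ C ∧ ∀ (x : X) (r R : ℝ), 0 < r → r ≤ R →
    ENNReal.ofReal R ≤ ENNReal.ofReal C * EMetric.diam (Set.univ : Set X) →
      ENNReal.ofReal ((R / r) ^ d) * ν (ball x r) ≤ ENNReal.ofReal C * ν (ball x R)

/-- The pointwise lower Lipschitz constant `lip f`. -/
def lipSlope {X : Type*} [MetricSpace X] (f : X → ℝ) (x : X) : ℝ≥0∞ :=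
  Filter.liminf (fun t : ℝ => ⨆ y ∈ closedBall x t, ENNReal.ofReal (|f x - f y| / t))
    (nhdsWithin 0 (Set.Ioi 0))

/-- The `(1,p)`-Poincaré inequality for `(X, ρ, ν)`. -/
def SupportsPoincare {X : Type*} [MetricSpace X] [MeasurableSpace X]
    (ν : Measure X) (p : ℝ) : Prop :=
  ∃ lam cP : ℝ, 0 < lam ∧ 0 < cP ∧
    ∀ f : X → ℝ, (∃ L : NNReal, LipschitzWith L f) → ∀ (x : X) (R : ℝ), 0 < R →
      (ν (ball x R))⁻¹ *
          ∫⁻ y in ball x R, ENNReal.ofReal |f y - ⨍ z in ball x R, f z ∂ν| ∂ν ≤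
        ENNReal.ofReal cP *
          ((ν (ball x (lam * R)))⁻¹ * ∫⁻ y in ball x (lam * R), lipSlope f y ^ p ∂ν) ^ (1 / p)

/-- The `A₂(μ)` condition for a weight `w`. -/
def IsA2Weight {X : Type*} [MetricSpace X] [MeasurableSpace X]
    (μ : Measure X) (w : X → ℝ≥0∞) : Prop :=
  Measurable w ∧ ∃ C : ℝ, ∀ (x : X) (R : ℝ), 0 < R →
    ((μ (ball x R))⁻¹ * ∫⁻ y in ball x R, w y ∂μ) *
      ((μ (ball x R))⁻¹ * ∫⁻ y in ball x R, (w y)⁻¹ ∂μ) ≤ ENNReal.ofReal C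

/-! ### Kernels and singular integral operators -/

/-- A standard (Calderón–Zygmund) kernel of Hölder exponent `η` with respect to `μ`. -/
def IsStandardKernel {X : Type*} [MetricSpace X] [MeasurableSpace X]
    (μ : Measure X) (K : X → X → ℂ) (η : ℝ) : Prop :=
  ∃ C : ℝ, 0 < C ∧ ∃ A : ℝ, 2 ≤ A ∧
    (∀ x y : X, x ≠ y → ‖K x y‖ ≤ C / (μ (ball x (dist x y))).toReal) ∧
    (∀ x x' y : X, x ≠ y → x' ≠ y → dist x x' ≤ dist x y / A →
      ‖K x y - K x' y‖ + ‖K y x - K y x'‖ ≤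
        C * (dist x x' / dist x y) ^ η / (μ (ball x (dist x y))).toReal)

/-- Non-degeneracy of a kernel. -/
def IsNondegenerateKernel {X : Type*} [MetricSpace X] [MeasurableSpace X]
    (μ : Measure X) (K : X → X → ℂ) : Prop :=
  ∃ c : ℝ, 1 ≤ c ∧ ∀ (x : X) (r : ℝ), 0 < r → ∃ y : X,
    r / c ≤ dist x y ∧ dist x y ≤ c * r ∧
    c⁻¹ / (μ (ball x (dist x y))).toReal ≤ ‖K x y‖ + ‖K y x‖

/-- Bounded functions with bounded support. -/
def IsBddWithBddSupport {X : Type*} [MetricSpace X] (f : X → ℂ) : Prop :=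
  Bornology.IsBounded (tsupport f) ∧ ∃ M : ℝ, ∀ x : X, ‖f x‖ ≤ M

/-- `T` is a singular integral operator on `L²(μ)` with kernel `K`. -/
def IsSIO {X : Type*} [MetricSpace X] [MeasurableSpace X]
    (μ : Measure X) (T : Lp ℂ 2 μ →L[ℂ] Lp ℂ 2 μ) (K : X → X → ℂ) : Prop :=
  ∀ (f : X → ℂ) (hf : MemLp f 2 μ), IsBddWithBddSupport f →
    ∀ᵐ x ∂μ, x ∉ tsupport f → (T (hf.toLp f) : X → ℂ) x = ∫ y, K x y * f y ∂μ

/-- `S` is a bounded extension of the commutator `[b, T] : f ↦ b·Tf − T(bf)` on `L²(μ)`. -/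
def IsCommutatorExtension {X : Type*} [MetricSpace X] [MeasurableSpace X]
    (μ : Measure X) (b : X → ℝ) (T S : Lp ℂ 2 μ →L[ℂ] Lp ℂ 2 μ) : Prop :=
  ∀ (f : X → ℂ) (hf : MemLp f 2 μ), IsBddWithBddSupport f →
    ∀ hbf : MemLp (fun x => (b x : ℂ) * f x) 2 μ,
      (S (hf.toLp f) : X → ℂ) =ᵐ[μ]
        fun x => (b x : ℂ) * (T (hf.toLp f) : X → ℂ) x - (T (hbf.toLp _) : X → ℂ) x

/-- `S` is a bounded extension of the commutator `[b, T]` on the weighted space `L²(w dμ)`,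
where `T` is an operator on `L²(μ)`. -/
def IsCommutatorExtensionWeighted {X : Type*} [MetricSpace X] [MeasurableSpace X]
    (μ : Measure X) (w : X → ℝ≥0∞) (b : X → ℝ) (T : Lp ℂ 2 μ →L[ℂ] Lp ℂ 2 μ)
    (S : Lp ℂ 2 (μ.withDensity w) →L[ℂ] Lp ℂ 2 (μ.withDensity w)) : Prop :=
  ∀ (f : X → ℂ) (hf : MemLp f 2 μ) (hfw : MemLp f 2 (μ.withDensity w)),
    IsBddWithBddSupport f →
    ∀ hbf : MemLp (fun x => (b x : ℂ) * f x) 2 μ,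
      (S (hfw.toLp f) : X → ℂ) =ᵐ[μ.withDensity w]
        fun x => (b x : ℂ) * (T (hf.toLp f) : X → ℂ) x - (T (hbf.toLp _) : X → ℂ) x

/-! ### Approximation numbers and Schatten norms -/

/-- The `n`-th approximation number of a bounded operator. -/
def approxNum {E : Type*} [NormedAddCommGroup E] [NormedSpace ℂ E]
    (n : ℕ) (A : E →L[ℂ] E) : ℝ :=
  sInf {t : ℝ | ∃ F : E →L[ℂ] E, LinearMap.rank (F : E →ₗ[ℂ] E) ≤ n ∧ t = ‖A - F‖}

/-- The Schatten `S^p` norm of a bounded operator. -/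
def schattenNorm {E : Type*} [NormedAddCommGroup E] [NormedSpace ℂ E]
    (p : ℝ) (A : E →L[ℂ] E) : ℝ≥0∞ :=
  (∑' n : ℕ, ENNReal.ofReal (approxNum n A ^ p)) ^ (1 / p)

/-- The weak Schatten `S^{d,∞}` norm of a bounded operator. -/
def weakSchattenNorm {E : Type*} [NormedAddCommGroup E] [NormedSpace ℂ E]
    (d : ℝ) (A : E →L[ℂ] E) : ℝ≥0∞ :=
  ⨆ n : ℕ, ENNReal.ofReal ((n + 1 : ℝ) ^ (1 / d) * approxNum n A)

/-! ### Function space norms -/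

/-- The Besov-type norm `‖b‖_{Ḃ^p(ν)}`. -/
def besovNorm {X : Type*} [MetricSpace X] [MeasurableSpace X]
    (ν : Measure X) (p : ℝ) (b : X → ℝ) : ℝ≥0∞ :=
  (∫⁻ x, ∫⁻ y, ENNReal.ofReal |b x - b y| ^ p / ν (ball x (dist x y)) ^ 2 ∂ν ∂ν) ^ (1 / p)

/-- The classical Besov norm `‖b‖_{Ḃ^{d/p}_{p,p}(ν)}`. -/
def besovClassicalNorm {X : Type*} [MetricSpace X] [MeasurableSpace X]
    (ν : Measure X) (d p : ℝ) (b : X → ℝ) : ℝ≥0∞ :=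
  (∫⁻ x, ∫⁻ y, ENNReal.ofReal |b x - b y| ^ p / ENNReal.ofReal (dist x y ^ (2 * d)) ∂ν ∂ν) ^
    (1 / p)

/-- `h` is a Hajłasz upper gradient of `b` with respect to `ν`. -/
def IsHajlaszGradient {X : Type*} [MetricSpace X] [MeasurableSpace X]
    (ν : Measure X) (b : X → ℝ) (h : X → ℝ≥0∞) : Prop :=
  ∀ᵐ x ∂ν, ∀ᵐ y ∂ν,
    ENNReal.ofReal |b x - b y| ≤ ENNReal.ofReal (dist x y) * (h x + h y)

/-- The Hajłasz–Sobolev norm `‖b‖_{Ṁ^{1,p}(ν)}`. -/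
def hajlaszNorm {X : Type*} [MetricSpace X] [MeasurableSpace X]
    (ν : Measure X) (p : ℝ) (b : X → ℝ) : ℝ≥0∞ :=
  ⨅ (h : X → ℝ≥0∞) (_ : Measurable h) (_ : IsHajlaszGradient ν b h),
    (∫⁻ x, h x ^ p ∂ν) ^ (1 / p)

end

/-- Per-ball comparison of oscillations under a reverse Hölder hypothesis. -/
theorem osc_le_of_reverseHolder {X : Type*} [MetricSpace X] [MeasurableSpace X] [BorelSpace X]
    (μ : Measure X)
    (hballs : ∀ (x : X) (R : ℝ), 0 < R → 0 < μ (ball x R) ∧ μ (ball x R) < ∞)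
    (w : X → ℝ≥0∞) (hw : Measurable w) (ν : Measure X) (hν : ν = μ.withDensity w)
    (t : ℝ) (ht : 1 < t) (C₀ : ℝ) (hC₀ : 1 ≤ C₀)
    (hballsν : ∀ (x : X) (R : ℝ), 0 < R → 0 < ν (ball x R) ∧ ν (ball x R) < ∞)
    (hRH : ∀ (x : X) (R : ℝ), 0 < R →
      ((μ (ball x R))⁻¹ * ∫⁻ y in ball x R, w y ^ t ∂μ) ^ (1 / t) ≤
        ENNReal.ofReal C₀ * (ν (ball x R) / μ (ball x R))) :
    ∀ (x : X) (R : ℝ), 0 < R → ∀ r : ℝ, 0 < r → ∀ f : X → ℝ, Measurable f →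
      osc r ν (ball x R) f ≤
        ENNReal.ofReal C₀ ^ (1 / r) * osc (r * (t / (t - 1))) μ (ball x R) f := by
  intro x R hR r hr f hf
  set B := ball x R
  set t' : ℝ := t / (t - 1) with ht'
  have hconj : t.HolderConjugate t' := Real.HolderConjugate.conjExponent ht
  have hconj' : t'.HolderConjugate t := hconj.symm
  have ht'pos : 0 < t' := hconj'.pos
  obtain ⟨hm0, hmt⟩ := hballs x R hR
  obtain ⟨hn0, hnt⟩ := hballsν x R hR
  set m := μ B with hmB
  set n := ν B with hnB
  have hmB' : MeasurableSet B := measurableSet_ball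
  have hK0 : (ENNReal.ofReal C₀ : ℝ≥0∞) ≠ 0 := by
    simp [ENNReal.ofReal_eq_zero]; linarith
  have hKt : (ENNReal.ofReal C₀ : ℝ≥0∞) ≠ ∞ := ENNReal.ofReal_ne_top
  -- main pointwise (in c) estimate
  have key : ∀ c : ℝ,
      ((n)⁻¹ * ∫⁻ y in B, (ENNReal.ofReal |f y - c|) ^ r ∂ν) ^ (1 / r) ≤
      ENNReal.ofReal C₀ ^ (1 / r) *
        ((m)⁻¹ * ∫⁻ y in B, (ENNReal.ofReal |f y - c|) ^ (r * t') ∂μ) ^ (1 / (r * t')) := by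
    intro c
    set g : X → ℝ≥0∞ := fun y => ENNReal.ofReal |f y - c| with hg
    have hgmeas : Measurable g := by
      apply Measurable.ennreal_ofReal
      exact (hf.sub measurable_const).abs
    -- rewrite ν-integral as μ-integral against w
    have hrw : (∫⁻ y in B, g y ^ r ∂ν) = ∫⁻ y in B, w y * g y ^ r ∂μ := by
      rw [hν, restrict_withDensity hmB',
        lintegral_withDensity_eq_lintegral_mul _ hw (hgmeas.pow_const r)]
      rfl
    -- Hölder
    have holder : (∫⁻ y in B, w y * g y ^ r ∂μ) ≤
        (∫⁻ y in B, w y ^ t ∂μ) ^ (1 / t) * (∫⁻ y in B, (g y ^ r) ^ t' ∂μ) ^ (1 / t') := by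
      exact ENNReal.lintegral_mul_le_Lp_mul_Lq (μ.restrict B) hconj
        hw.aemeasurable (hgmeas.pow_const r).aemeasurable
    have hexp : ∀ y, (g y ^ r) ^ t' = g y ^ (r * t') := fun y =>
      (ENNReal.rpow_mul (g y) r t').symm
    set W := ∫⁻ y in B, w y ^ t ∂μ with hW
    set G := ∫⁻ y in B, g y ^ (r * t') ∂μ with hG
    have holder' : (∫⁻ y in B, g y ^ r ∂ν) ≤ W ^ (1 / t) * G ^ (1 / t') := by
      rw [hrw]
      refine holder.trans (le_of_eq ?_)
      rw [show (∫⁻ y in B, (g y ^ r) ^ t' ∂μ) = G from lintegral_congr fun y => hexp y]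
    -- bound W^{1/t}
    have hWbound : W ^ (1 / t) ≤ m ^ (1 / t) * (ENNReal.ofReal C₀ * (n / m)) := by
      have : W = m * (m⁻¹ * W) := by
        rw [← mul_assoc, ENNReal.mul_inv_cancel hm0.ne' hmt.ne, one_mul]
      rw [this, ENNReal.mul_rpow_of_nonneg _ _ (by positivity)]
      exact mul_le_mul_right (hRH x R hR) _
    -- combine
    have step : n⁻¹ * (∫⁻ y in B, g y ^ r ∂ν) ≤
        ENNReal.ofReal C₀ * (m⁻¹ * G) ^ (1 / t') := by
      calc n⁻¹ * (∫⁻ y in B, g y ^ r ∂ν)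
          ≤ n⁻¹ * (W ^ (1 / t) * G ^ (1 / t')) := mul_le_mul_right holder' _
        _ ≤ n⁻¹ * (m ^ (1 / t) * (ENNReal.ofReal C₀ * (n / m)) * G ^ (1 / t')) :=
            mul_le_mul_right (mul_le_mul_left hWbound _) _
        _ = ENNReal.ofReal C₀ * ((m ^ (1 / t) * m⁻¹) * G ^ (1 / t')) * (n⁻¹ * n) := by
            rw [show n / m = n * m⁻¹ from div_eq_mul_inv n m]; ring
        _ = ENNReal.ofReal C₀ * ((m⁻¹) ^ (1 / t') * G ^ (1 / t')) := by
            rw [ENNReal.inv_mul_cancel hn0.ne' hnt.ne, mul_one]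
            congr 2
            have h1 : m⁻¹ = m ^ (-1 : ℝ) := by rw [ENNReal.rpow_neg_one]
            have h2 : (m⁻¹) ^ (1/t') = m ^ (-(1/t')) := by
              rw [h1, ← ENNReal.rpow_mul]; norm_num
            rw [h2, h1, ← ENNReal.rpow_add _ _ hm0.ne' hmt.ne]
            congr 1
            have := hconj.inv_add_inv_eq_one
            rw [one_div, one_div]
            linarith
        _ = ENNReal.ofReal C₀ * (m⁻¹ * G) ^ (1 / t') := by
            rw [ENNReal.mul_rpow_of_nonneg _ _ (by positivity)]
    calc (n⁻¹ * ∫⁻ y in B, g y ^ r ∂ν) ^ (1 / r)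
        ≤ (ENNReal.ofReal C₀ * (m⁻¹ * G) ^ (1 / t')) ^ (1 / r) :=
          ENNReal.rpow_le_rpow step (by positivity)
      _ = ENNReal.ofReal C₀ ^ (1 / r) * (m⁻¹ * G) ^ (1 / (r * t')) := by
          rw [ENNReal.mul_rpow_of_nonneg _ _ (by positivity), ← ENNReal.rpow_mul]
          congr 2
          field_simp
  -- conclude by infimum
  rw [osc, osc, ENNReal.mul_iInf_of_ne
      (ENNReal.rpow_pos (ENNReal.ofReal_pos.2 (by linarith)) hKt).ne'
      (ENNReal.rpow_ne_top_of_nonneg (by positivity) hKt)]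
  exact le_iInf fun c => (iInf_le _ c).trans (key c)
end

section
/- Let (X,ρ) be a metric space and let μ, ν be doubling Borel measures on X satisfying the A∞ relation, i.e., there exist ε, δ ∈ (0,1) such that for every metric ball B and every measurable E ⊆ B, μ(E) ≤ ε μ(B) implies ν(E) ≤ (1−δ) ν(B). Then μ and ν are mutually absolutely continuous: μ(E) = 0 if and only if ν(E) = 0 for every measurable set E. -/
open MeasureTheory Metric ENNReal Set

open MeasureTheory Metric ENNReal Set Filter
open scoped Topology NNReal

private lemma doubling_pow {X : Type*} [MetricSpace X] [MeasurableSpace X]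
    (μ : Measure X) {C : ℝ}
    (hC : ∀ (x : X) (R : ℝ), 0 < R → μ (ball x (2 * R)) ≤ ENNReal.ofReal C * μ (ball x R)) :
    ∀ (k : ℕ) (x : X) (r : ℝ), 0 < r →
      μ (ball x (2 ^ k * r)) ≤ (ENNReal.ofReal C) ^ k * μ (ball x r) := by
  intro k
  induction k with
  | zero => intro x r hr; simp
  | succ k ih =>
    intro x r hr
    have h1 : (2 : ℝ) ^ (k + 1) * r = 2 * (2 ^ k * r) := by ring
    rw [h1]
    calc μ (ball x (2 * (2 ^ k * r))) ≤ ENNReal.ofReal C * μ (ball x (2 ^ k * r)) :=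
          hC x _ (by positivity)
      _ ≤ ENNReal.ofReal C * ((ENNReal.ofReal C) ^ k * μ (ball x r)) := by
          gcongr; exact ih x r hr
      _ = (ENNReal.ofReal C) ^ (k + 1) * μ (ball x r) := by ring

private lemma secondCountable_of_doubling {X : Type*} [MetricSpace X] [MeasurableSpace X]
    [BorelSpace X] (μ : Measure X) (hμ : IsDoublingMeasure μ) :
    SecondCountableTopology X := by
  classical
  obtain ⟨hpos, C, hC⟩ := hμ
  have hsep : TopologicalSpace.IsSeparable (univ : Set X) := by
    rcases isEmpty_or_nonempty X with hX | hX
    · exact Set.countable_univ.isSeparable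
    obtain ⟨x₀⟩ := hX
    have hCne : ENNReal.ofReal C ≠ 0 := by
      intro h0
      have h1 := hC x₀ 1 one_pos
      rw [h0, zero_mul, mul_one] at h1
      exact absurd (le_antisymm h1 zero_le) (hpos x₀ 2 two_pos).1.ne'
    have htb : ∀ R : ℝ, 0 < R → TotallyBounded (ball x₀ R) := by
      intro R hR
      rw [Metric.totallyBounded_iff]
      by_contra h
      push_neg at h
      obtain ⟨ε, hε, h⟩ := h
      have key : ∀ t : Finset X, ∃ y, y ∈ ball x₀ R ∧ ∀ z ∈ t, ε ≤ dist y z := by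
        intro t
        have h2 := h (↑t : Set X) t.finite_toSet
        rw [Set.not_subset] at h2
        obtain ⟨y, hy, hy2⟩ := h2
        refine ⟨y, hy, fun z hz => ?_⟩
        by_contra hlt
        push_neg at hlt
        exact hy2 (Set.mem_biUnion hz (Metric.mem_ball.2 hlt))
      choose g hg1 hg2 using key
      let v : ℕ → Finset X := fun n => Nat.rec ∅ (fun _ t => insert (g t) t) n
      have hvmono : Monotone v := monotone_nat_of_le_succ fun n => Finset.subset_insert _ _
      set u : ℕ → X := fun n => g (v n) with hu
      have humem : ∀ n, u n ∈ ball x₀ R := fun n => hg1 _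
      have husep : ∀ m n, m < n → ε ≤ dist (u n) (u m) := by
        intro m n hmn
        exact hg2 (v n) (u m) (hvmono hmn (Finset.mem_insert_self _ _))
      have hdisj : Pairwise (Function.onFun Disjoint (fun n => ball (u n) (ε / 2))) := by
        intro m n hmn
        have hd : ε ≤ dist (u m) (u n) := by
          rcases hmn.lt_or_gt with hlt | hlt
          · rw [dist_comm]; exact husep m n hlt
          · exact husep n m hlt
        exact ball_disjoint_ball (by linarith)
      obtain ⟨k, hk⟩ := pow_unbounded_of_one_lt (4 * R / ε) (one_lt_two (α := ℝ))
      have hsub : ∀ n, ball x₀ R ⊆ ball (u n) (2 ^ k * (ε / 2)) := by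
        intro n y hy
        have h1 : dist y (u n) < 2 * R := by
          have hy1 := Metric.mem_ball.1 hy
          have hy2 := Metric.mem_ball.1 (humem n)
          calc dist y (u n) ≤ dist y x₀ + dist (u n) x₀ := dist_triangle_right _ _ _
            _ < R + R := by linarith
            _ = 2 * R := by ring
        have h2 : 2 * R ≤ 2 ^ k * (ε / 2) := by
          rw [div_lt_iff₀ hε] at hk
          nlinarith
        exact Metric.mem_ball.2 (lt_of_lt_of_le h1 h2)
      have hlow : ∀ n, μ (ball x₀ R) ≤ (ENNReal.ofReal C) ^ k * μ (ball (u n) (ε / 2)) :=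
        fun n => (measure_mono (hsub n)).trans (doubling_pow μ hC k (u n) (ε / 2) (by positivity))
      set c := μ (ball x₀ R) / (ENNReal.ofReal C) ^ k with hc
      have hc0 : c ≠ 0 :=
        (ENNReal.div_pos (hpos x₀ R hR).1.ne' (pow_ne_top ofReal_ne_top)).ne'
      have hcn : ∀ n, c ≤ μ (ball (u n) (ε / 2)) := fun n =>
        ENNReal.div_le_of_le_mul (by rw [mul_comm]; exact hlow n)
      have hfin : ∑' n, μ (ball (u n) (ε / 2)) ≠ ∞ := by
        rw [← measure_iUnion hdisj fun n => measurableSet_ball]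
        refine ne_top_of_le_ne_top (hpos x₀ (R + ε / 2) (by positivity)).2.ne
          (measure_mono (iUnion_subset fun n => ?_))
        exact ball_subset_ball' (by have := Metric.mem_ball.1 (humem n); linarith)
      have hfin2 := ENNReal.finite_const_le_of_tsum_ne_top hfin hc0
      exact Set.infinite_univ (hfin2.subset fun n _ => hcn n)
    have huniv : (univ : Set X) = ⋃ n : ℕ, ball x₀ (n + 1) := by
      ext y
      simp only [mem_iUnion, mem_univ, true_iff, Metric.mem_ball]
      obtain ⟨n, hn⟩ := exists_nat_gt (dist y x₀)
      exact ⟨n, by linarith⟩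
    rw [huniv]
    exact TopologicalSpace.IsSeparable.iUnion fun n => (htb (n + 1) (by positivity)).isSeparable
  haveI : TopologicalSpace.SeparableSpace X := TopologicalSpace.isSeparable_univ_iff.1 hsep
  exact UniformSpace.secondCountable_of_separable X

private lemma null_of_null {X : Type*} [MetricSpace X] [MeasurableSpace X] [BorelSpace X]
    (μ ν : Measure X) (hμ : IsDoublingMeasure μ) (hν : IsDoublingMeasure ν)
    (hA : AInftyRel μ ν) {E : Set X} (hE : MeasurableSet E) (hμE : μ E = 0) : ν E = 0 := by
  by_contra hνE
  haveI : SecondCountableTopology X := secondCountable_of_doubling μ hμ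
  haveI : IsLocallyFiniteMeasure ν :=
    ⟨fun x => ⟨ball x 1, ball_mem_nhds x one_pos, (hν.1 x 1 one_pos).2⟩⟩
  haveI : IsUnifLocDoublingMeasure ν := by
    obtain ⟨hpos, C, hC⟩ := hν
    refine ⟨⟨(ENNReal.ofReal C).toNNReal ^ 2, ?_⟩⟩
    filter_upwards [self_mem_nhdsWithin] with r hr
    have hr0 : (0 : ℝ) < r := hr
    intro x
    have hcoe : ((((ENNReal.ofReal C).toNNReal ^ 2 : NNReal)) : ℝ≥0∞)
        = ENNReal.ofReal C * ENNReal.ofReal C := by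
      rw [ENNReal.coe_pow, ENNReal.coe_toNNReal ofReal_ne_top, sq]
    rw [hcoe]
    calc ν (closedBall x (2 * r)) ≤ ν (ball x (2 * (2 * r))) :=
          measure_mono (closedBall_subset_ball (by linarith))
      _ ≤ ENNReal.ofReal C * ν (ball x (2 * r)) := hC x (2 * r) (by linarith)
      _ ≤ ENNReal.ofReal C * (ENNReal.ofReal C * ν (ball x r)) := by
          gcongr; exact hC x r hr0
      _ ≤ ENNReal.ofReal C * ENNReal.ofReal C * ν (closedBall x r) := by
          rw [mul_assoc]
          exact mul_le_mul_right (mul_le_mul_right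
            (measure_mono ball_subset_closedBall) _) _
  obtain ⟨ε, δ, hε0, hε1, hδ0, hδ1, hA⟩ := hA
  -- key claim: the density of E in any closed ball is at most 1 - δ
  have claim : ∀ (x : X) (r : ℝ), 0 < r →
      ν (E ∩ closedBall x r) ≤ ENNReal.ofReal (1 - δ) * ν (closedBall x r) := by
    intro x r hr
    have hmono : Antitone fun n : ℕ => ball x (r + 1 / (n + 1)) := by
      intro m n hmn
      apply ball_subset_ball
      have h1 : (1 : ℝ) / (n + 1) ≤ 1 / (m + 1) :=
        one_div_le_one_div_of_le (by positivity) (by exact_mod_cast Nat.succ_le_succ hmn)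
      linarith
    have hiInter : ⋂ n : ℕ, ball x (r + 1 / (n + 1)) = closedBall x r := by
      ext y
      simp only [mem_iInter, Metric.mem_ball, Metric.mem_closedBall]
      constructor
      · intro h
        refine le_of_forall_pos_le_add fun θ hθ => ?_
        obtain ⟨n, hn⟩ := exists_nat_one_div_lt hθ
        exact (h n).le.trans (by linarith)
      · intro h n
        have h1 : (0 : ℝ) < 1 / ((n : ℝ) + 1) := by positivity
        linarith
    have htend : Tendsto (fun n : ℕ => ν (ball x (r + 1 / (n + 1)))) atTop
        (𝓝 (ν (closedBall x r))) := by
      rw [← hiInter]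
      exact tendsto_measure_iInter_atTop (fun n => measurableSet_ball.nullMeasurableSet) hmono
        ⟨0, by simpa using (hν.1 x (r + 1) (by linarith)).2.ne⟩
    have hle : ∀ n : ℕ, ν (E ∩ closedBall x r)
        ≤ ENNReal.ofReal (1 - δ) * ν (ball x (r + 1 / (n + 1))) := by
      intro n
      have hr' : (0 : ℝ) < r + 1 / ((n : ℝ) + 1) := by positivity
      refine hA x _ hr' _ (hE.inter measurableSet_closedBall) ?_ ?_
      · intro y hy
        refine Metric.mem_ball.2 (lt_of_le_of_lt (Metric.mem_closedBall.1 hy.2) ?_)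
        have h1 : (0 : ℝ) < 1 / ((n : ℝ) + 1) := by positivity
        linarith
      · have h0 : μ (E ∩ closedBall x r) = 0 := measure_mono_null inter_subset_left hμE
        rw [h0]; exact zero_le
    exact ge_of_tendsto (ENNReal.Tendsto.const_mul htend (Or.inr ofReal_ne_top))
      (Eventually.of_forall hle)
  -- Lebesgue density theorem
  have hdens := IsUnifLocDoublingMeasure.ae_tendsto_measure_inter_div (μ := ν) E 1
  have hres : ν.restrict E ≠ 0 := by
    intro h0
    exact hνE (by rw [← Measure.restrict_apply_univ E, h0]; rfl)
  haveI := ae_neBot.2 hres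
  obtain ⟨x, hx⟩ := hdens.exists
  have hδlim : Tendsto (fun n : ℕ => 1 / ((n : ℝ) + 1)) atTop (𝓝[>] 0) := by
    apply tendsto_nhdsWithin_of_tendsto_nhds_of_eventually_within
    · exact tendsto_one_div_add_atTop_nhds_zero_nat
    · exact Eventually.of_forall fun n => Set.mem_Ioi.2 (by positivity)
  have hxmem : ∀ᶠ n : ℕ in atTop, x ∈ closedBall x (1 * (1 / ((n : ℝ) + 1))) :=
    Eventually.of_forall fun n =>
      Metric.mem_closedBall.2 (by rw [dist_self]; positivity)
  have hlim := hx (ι := ℕ) (l := atTop) (fun _ => x) (fun n : ℕ => 1 / ((n : ℝ) + 1)) hδlim hxmem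
  have hub : ∀ n : ℕ, ν (E ∩ closedBall x (1 / ((n : ℝ) + 1))) /
      ν (closedBall x (1 / ((n : ℝ) + 1))) ≤ ENNReal.ofReal (1 - δ) := fun n =>
    ENNReal.div_le_of_le_mul (claim x _ (by positivity))
  have h1 : (1 : ℝ≥0∞) ≤ ENNReal.ofReal (1 - δ) := le_of_tendsto hlim (Eventually.of_forall hub)
  have h2 : ENNReal.ofReal (1 - δ) < 1 := by
    rw [← ENNReal.ofReal_one]
    exact (ENNReal.ofReal_lt_ofReal_iff one_pos).2 (by linarith)
  exact absurd (h1.trans_lt h2) (lt_irrefl _)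

private lemma aInftyRel_symm {X : Type*} [MetricSpace X] [MeasurableSpace X] [BorelSpace X]
    (μ ν : Measure X) (hμ : IsDoublingMeasure μ) (hν : IsDoublingMeasure ν)
    (hA : AInftyRel μ ν) : AInftyRel ν μ := by
  obtain ⟨ε, δ, hε0, hε1, hδ0, hδ1, hA⟩ := hA
  refine ⟨δ / 2, ε, by linarith, by linarith, hε0, hε1, ?_⟩
  intro x R hR F hF hFs hFν
  set B := ball x R with hB
  have hBν0 : ν B ≠ 0 := (hν.1 x R hR).1.ne'
  have hBνt : ν B ≠ ⊤ := (hν.1 x R hR).2.ne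
  have hBμt : μ B ≠ ⊤ := (hμ.1 x R hR).2.ne
  have hBF : B ∩ F = F := Set.inter_eq_right.2 hFs
  have hsplitν : ν F + ν (B \ F) = ν B := by
    rw [← measure_inter_add_diff B hF, hBF]
  have hkey : ¬ ν (B \ F) ≤ ENNReal.ofReal (1 - δ) * ν B := by
    intro hcon
    have h1 : ν B ≤ ENNReal.ofReal (δ / 2) * ν B + ENNReal.ofReal (1 - δ) * ν B :=
      hsplitν.symm.trans_le (add_le_add hFν hcon)
    have h2 : ENNReal.ofReal (δ / 2) * ν B + ENNReal.ofReal (1 - δ) * ν B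
        = ENNReal.ofReal (1 - δ / 2) * ν B := by
      rw [← add_mul, ← ENNReal.ofReal_add (by linarith) (by linarith)]
      congr 2
      ring
    have h3 : ENNReal.ofReal (1 - δ / 2) * ν B < 1 * ν B :=
      ENNReal.mul_lt_mul_left hBν0 hBνt (by
        rw [← ENNReal.ofReal_one]
        exact (ENNReal.ofReal_lt_ofReal_iff one_pos).2 (by linarith))
    rw [one_mul] at h3
    exact absurd (h1.trans_lt (h2 ▸ h3)) (lt_irrefl _)
  have hμdiff : ¬ μ (B \ F) ≤ ENNReal.ofReal ε * μ B := fun hcon =>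
    hkey (hA x R hR (B \ F) (measurableSet_ball.diff hF) diff_subset hcon)
  push_neg at hμdiff
  have hsplitμ : μ F + μ (B \ F) = μ B := by
    rw [← measure_inter_add_diff B hF, hBF]
  have h4 : μ F + ENNReal.ofReal ε * μ B ≤ μ B := by
    calc μ F + ENNReal.ofReal ε * μ B ≤ μ F + μ (B \ F) := add_le_add_right hμdiff.le _
      _ = μ B := hsplitμ
  have h5 : ENNReal.ofReal (1 - ε) * μ B + ENNReal.ofReal ε * μ B = μ B := by
    rw [← add_mul, ← ENNReal.ofReal_add (by linarith) (by linarith)]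
    norm_num
  have hεt : ENNReal.ofReal ε * μ B ≠ ⊤ := mul_ne_top ofReal_ne_top hBμt
  exact (ENNReal.add_le_add_iff_right hεt).1 (by rw [h5]; exact h4)

/-- Doubling measures in the `A∞` relation are mutually absolutely continuous. -/
theorem mutuallyAC_of_aInfty {X : Type*} [MetricSpace X] [MeasurableSpace X] [BorelSpace X]
    (μ ν : Measure X) (hμ : IsDoublingMeasure μ) (hν : IsDoublingMeasure ν)
    (hA : AInftyRel μ ν) :
    ∀ E : Set X, MeasurableSet E → (μ E = 0 ↔ ν E = 0) := by
  intro E hE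
  constructor
  · exact fun h => null_of_null μ ν hμ hν hA hE h
  · exact fun h => null_of_null ν μ hν hμ (aInftyRel_symm μ ν hμ hν hA) hE h
end

section
/- Let n ≥ 0 and λ > 0. The Bessel measure dm_λ(x) := x_{n+1}^{2λ} dx on the half-space ℝ^{n+1}_+ := ℝ^n × (0,∞), equipped with the Euclidean metric, is a doubling measure: every metric ball of ℝ^{n+1}_+ has finite positive m_λ-measure, and there is a constant C = C(n,λ) such that m_λ(B(x,2R) ∩ ℝ^{n+1}_+) ≤ C · m_λ(B(x,R) ∩ ℝ^{n+1}_+) for all x ∈ ℝ^{n+1}_+ and R > 0. -/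
open MeasureTheory Metric ENNReal Set

private lemma bessel_coord_le_dist {n : ℕ} (x y : EuclideanSpace ℝ (Fin (n + 1)))
    (i : Fin (n + 1)) : |x i - y i| ≤ dist x y := by
  rw [EuclideanSpace.dist_eq, ← Real.sqrt_sq_eq_abs]
  apply Real.sqrt_le_sqrt
  have h := Finset.single_le_sum (f := fun j => dist (x j) (y j) ^ 2)
    (fun j _ => sq_nonneg _) (Finset.mem_univ i)
  simpa [Real.dist_eq] using h

private lemma bessel_upper {n : ℕ} (p : ℝ) (hp : 0 ≤ p)
    (s : Set (EuclideanSpace ℝ (Fin (n + 1)))) (hs : MeasurableSet s) (M : ℝ)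
    (h0 : ∀ y ∈ s, 0 ≤ y (Fin.last n)) (hM : ∀ y ∈ s, y (Fin.last n) ≤ M) :
    (volume.withDensity (fun y => ENNReal.ofReal (y (Fin.last n) ^ p))) s ≤
      ENNReal.ofReal (M ^ p) * volume s := by
  rw [withDensity_apply _ hs]
  calc ∫⁻ y in s, ENNReal.ofReal (y (Fin.last n) ^ p) ∂volume
      ≤ ∫⁻ _ in s, ENNReal.ofReal (M ^ p) ∂volume :=
        setLIntegral_mono measurable_const fun y hy =>
          ENNReal.ofReal_le_ofReal (Real.rpow_le_rpow (h0 y hy) (hM y hy) hp)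
    _ = ENNReal.ofReal (M ^ p) * volume s := setLIntegral_const _ _

private lemma bessel_lower {n : ℕ} (p : ℝ) (hp : 0 ≤ p)
    (s : Set (EuclideanSpace ℝ (Fin (n + 1)))) (hs : MeasurableSet s) (c : ℝ) (hc : 0 ≤ c)
    (hcs : ∀ y ∈ s, c ≤ y (Fin.last n)) :
    ENNReal.ofReal (c ^ p) * volume s ≤
      (volume.withDensity (fun y => ENNReal.ofReal (y (Fin.last n) ^ p))) s := by
  rw [withDensity_apply _ hs]
  have heval : Measurable fun y : EuclideanSpace ℝ (Fin (n + 1)) => y (Fin.last n) :=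
    (measurable_pi_apply (Fin.last n)).comp
      (MeasurableEquiv.toLp 2 (Fin (n + 1) → ℝ)).symm.measurable
  have hmeas : Measurable fun y : EuclideanSpace ℝ (Fin (n + 1)) =>
      ENNReal.ofReal (y (Fin.last n) ^ p) :=
    ENNReal.measurable_ofReal.comp ((Real.continuous_rpow_const hp).measurable.comp heval)
  calc ENNReal.ofReal (c ^ p) * volume s
      = ∫⁻ _ in s, ENNReal.ofReal (c ^ p) ∂volume := (setLIntegral_const _ _).symm
    _ ≤ ∫⁻ y in s, ENNReal.ofReal (y (Fin.last n) ^ p) ∂volume :=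
        setLIntegral_mono hmeas fun y hy =>
          ENNReal.ofReal_le_ofReal (Real.rpow_le_rpow hc (hcs y hy) hp)

/-- The Bessel measure `dm_λ = x_{n+1}^{2λ} dx` on the half-space
`ℝ^{n+1}_+`, with the Euclidean metric, is doubling: balls of the half-space have finite
positive measure, and `m_λ(B(x,2R) ∩ ℝ^{n+1}_+) ≤ C m_λ(B(x,R) ∩ ℝ^{n+1}_+)`. -/
theorem besselMeasure_isDoubling (n : ℕ) (lam : ℝ) (hlam : 0 < lam) :
    (∀ x : EuclideanSpace ℝ (Fin (n + 1)), 0 < x (Fin.last n) → ∀ R : ℝ, 0 < R →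
      0 < ((volume : Measure (EuclideanSpace ℝ (Fin (n + 1)))).withDensity
            (fun y => ENNReal.ofReal (y (Fin.last n) ^ (2 * lam))))
          (ball x R ∩ {y | 0 < y (Fin.last n)}) ∧
      ((volume : Measure (EuclideanSpace ℝ (Fin (n + 1)))).withDensity
            (fun y => ENNReal.ofReal (y (Fin.last n) ^ (2 * lam))))
          (ball x R ∩ {y | 0 < y (Fin.last n)}) < ∞) ∧
    ∃ C : ℝ, 0 < C ∧
      ∀ x : EuclideanSpace ℝ (Fin (n + 1)), 0 < x (Fin.last n) → ∀ R : ℝ, 0 < R →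
        ((volume : Measure (EuclideanSpace ℝ (Fin (n + 1)))).withDensity
            (fun y => ENNReal.ofReal (y (Fin.last n) ^ (2 * lam))))
          (ball x (2 * R) ∩ {y | 0 < y (Fin.last n)}) ≤
        ENNReal.ofReal C *
          ((volume : Measure (EuclideanSpace ℝ (Fin (n + 1)))).withDensity
              (fun y => ENNReal.ofReal (y (Fin.last n) ^ (2 * lam))))
            (ball x R ∩ {y | 0 < y (Fin.last n)}) := by
  have hp : (0:ℝ) ≤ 2 * lam := by linarith
  set μ := (volume : Measure (EuclideanSpace ℝ (Fin (n + 1)))).withDensity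
      (fun y => ENNReal.ofReal (y (Fin.last n) ^ (2 * lam))) with hμ
  have heval : Measurable fun y : EuclideanSpace ℝ (Fin (n + 1)) => y (Fin.last n) :=
    (measurable_pi_apply (Fin.last n)).comp
      (MeasurableEquiv.toLp 2 (Fin (n + 1) → ℝ)).symm.measurable
  have hmeasH : MeasurableSet {y : EuclideanSpace ℝ (Fin (n + 1)) | 0 < y (Fin.last n)} :=
    measurableSet_lt measurable_const heval
  constructor
  · intro x hx R hR
    set t := x (Fin.last n) with htdef
    have hcoord : ∀ y : EuclideanSpace ℝ (Fin (n + 1)), |y (Fin.last n) - t| ≤ dist y x :=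
      fun y => bessel_coord_le_dist y x (Fin.last n)
    constructor
    · -- positivity
      set b := min R t with hbdef
      have hb : 0 < b := lt_min hR hx
      have hsub : ball x (b / 2) ⊆ ball x R ∩ {y | 0 < y (Fin.last n)} := by
        intro y hy
        have hd : dist y x < b / 2 := mem_ball.mp hy
        refine ⟨mem_ball.mpr (lt_of_lt_of_le hd (by
          have : b ≤ R := min_le_left _ _
          linarith)), ?_⟩
        have h1 : |y (Fin.last n) - t| < b / 2 := lt_of_le_of_lt (hcoord y) hd
        have hbt : b ≤ t := min_le_right _ _
        have := abs_lt.mp h1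
        simp only [Set.mem_setOf_eq]
        linarith [this.1]
      have hlow := bessel_lower (n := n) (2 * lam) hp (ball x (b / 2)) measurableSet_ball
        (t / 2) (by linarith) (by
          intro y hy
          have hd : dist y x < b / 2 := mem_ball.mp hy
          have h1 := lt_of_le_of_lt (hcoord y) hd
          have hbt : b ≤ t := min_le_right _ _
          have := abs_lt.mp h1
          linarith [this.1])
      have hpos : 0 < ENNReal.ofReal ((t / 2) ^ (2 * lam)) * volume (ball x (b / 2)) := by
        apply ENNReal.mul_pos
        · simp only [ne_eq, ENNReal.ofReal_eq_zero, not_le]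
          exact Real.rpow_pos_of_pos (by linarith) _
        · exact (measure_ball_pos _ _ (by linarith)).ne'
      exact lt_of_lt_of_le hpos (le_trans hlow (measure_mono hsub))
    · -- finiteness
      have hup := bessel_upper (n := n) (2 * lam) hp (ball x R ∩ {y | 0 < y (Fin.last n)})
        (measurableSet_ball.inter hmeasH) (t + R)
        (fun y hy => le_of_lt hy.2)
        (by
          intro y hy
          have h1 := lt_of_le_of_lt (hcoord y) (mem_ball.mp hy.1)
          have := abs_lt.mp h1
          linarith [this.2])
      refine lt_of_le_of_lt hup ?_
      exact ENNReal.mul_lt_top ENNReal.ofReal_lt_top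
        (lt_of_le_of_lt (measure_mono Set.inter_subset_left) measure_ball_lt_top)
  · refine ⟨10 ^ (2 * lam) * 8 ^ (n + 1), by positivity, ?_⟩
    intro x hx R hR
    set t := x (Fin.last n) with htdef
    set t' := max t (R / 2) with ht'def
    have ht'R : R / 2 ≤ t' := le_max_right _ _
    have htt' : t ≤ t' := le_max_left _ _
    have ht'pos : 0 < t' := lt_of_lt_of_le (by linarith) ht'R
    have ht't : t' - t ≤ R / 2 := by
      have : t' ≤ t + R / 2 := max_le (by linarith) (by linarith)
      linarith
    set x' : EuclideanSpace ℝ (Fin (n + 1)) :=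
      x + (t' - t) • (EuclideanSpace.single (Fin.last n) (1:ℝ)) with hx'def
    have hx'last : x' (Fin.last n) = t' := by
      simp [hx'def, EuclideanSpace.single_apply]
      rw [← htdef]; ring
    have hdistx' : dist x' x = t' - t := by
      rw [dist_eq_norm]
      have : x' - x = (t' - t) • (EuclideanSpace.single (Fin.last n) (1:ℝ)) := by
        rw [hx'def]; abel
      rw [this, norm_smul, EuclideanSpace.norm_single]
      simp [abs_of_nonneg (by linarith : (0:ℝ) ≤ t' - t)]
    have hcoord' : ∀ y : EuclideanSpace ℝ (Fin (n + 1)), |y (Fin.last n) - t'| ≤ dist y x' := by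
      intro y
      have := bessel_coord_le_dist y x' (Fin.last n)
      rwa [hx'last] at this
    have hcoord : ∀ y : EuclideanSpace ℝ (Fin (n + 1)), |y (Fin.last n) - t| ≤ dist y x :=
      fun y => bessel_coord_le_dist y x (Fin.last n)
    have hsub : ball x' (R / 4) ⊆ ball x R ∩ {y | 0 < y (Fin.last n)} := by
      intro y hy
      have hd : dist y x' < R / 4 := mem_ball.mp hy
      refine ⟨mem_ball.mpr ?_, ?_⟩
      · calc dist y x ≤ dist y x' + dist x' x := dist_triangle _ _ _
          _ < R / 4 + (t' - t) := by linarith [hdistx']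
          _ ≤ R := by linarith
      · have h1 := lt_of_le_of_lt (hcoord' y) hd
        have := abs_lt.mp h1
        simp only [Set.mem_setOf_eq]
        linarith [this.1]
    -- lower bound for μ (ball x R ∩ H)
    have hlow := bessel_lower (n := n) (2 * lam) hp (ball x' (R / 4)) measurableSet_ball
      (t' / 2) (by linarith) (by
        intro y hy
        have h1 := lt_of_le_of_lt (hcoord' y) (mem_ball.mp hy)
        have := abs_lt.mp h1
        linarith [this.1])
    have hlow2 : ENNReal.ofReal ((t' / 2) ^ (2 * lam)) * volume (ball x' (R / 4)) ≤
        μ (ball x R ∩ {y | 0 < y (Fin.last n)}) :=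
      le_trans hlow (measure_mono hsub)
    -- upper bound for μ (ball x (2R) ∩ H)
    have hup := bessel_upper (n := n) (2 * lam) hp
      (ball x (2 * R) ∩ {y | 0 < y (Fin.last n)})
      (measurableSet_ball.inter hmeasH) (5 * t')
      (fun y hy => le_of_lt hy.2)
      (by
        intro y hy
        have h1 := lt_of_le_of_lt (hcoord y) (mem_ball.mp hy.1)
        have := abs_lt.mp h1
        have h2R : 2 * R ≤ 4 * t' := by linarith
        linarith [this.2])
    -- ball volumes
    have hvol2 : volume (ball x (2 * R)) =
        ENNReal.ofReal ((2 * R) ^ (n + 1)) *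
          volume (ball (0 : EuclideanSpace ℝ (Fin (n + 1))) 1) := by
      rw [Measure.addHaar_ball volume x (by linarith : (0:ℝ) ≤ 2 * R),
        finrank_euclideanSpace_fin]
    have hvol4 : volume (ball x' (R / 4)) =
        ENNReal.ofReal ((R / 4) ^ (n + 1)) *
          volume (ball (0 : EuclideanSpace ℝ (Fin (n + 1))) 1) := by
      rw [Measure.addHaar_ball volume x' (by linarith : (0:ℝ) ≤ R / 4),
        finrank_euclideanSpace_fin]
    -- the key real computation
    have hreal : (5 * t') ^ (2 * lam) * (2 * R) ^ (n + 1) =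
        (10 ^ (2 * lam) * 8 ^ (n + 1)) * ((t' / 2) ^ (2 * lam) * (R / 4) ^ (n + 1)) := by
      have e1 : (5 * t') ^ (2 * lam) = 10 ^ (2 * lam) * (t' / 2) ^ (2 * lam) := by
        rw [show (5:ℝ) * t' = 10 * (t' / 2) by ring,
          Real.mul_rpow (by norm_num) (by positivity)]
      have e2 : (2 * R) ^ (n + 1) = 8 ^ (n + 1) * (R / 4) ^ (n + 1) := by
        rw [show (2:ℝ) * R = 8 * (R / 4) by ring, mul_pow]
      rw [e1, e2]; ring
    calc μ (ball x (2 * R) ∩ {y | 0 < y (Fin.last n)})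
        ≤ ENNReal.ofReal ((5 * t') ^ (2 * lam)) * volume (ball x (2 * R)) :=
          le_trans hup (mul_le_mul_right (measure_mono Set.inter_subset_left) _)
      _ = ENNReal.ofReal ((5 * t') ^ (2 * lam) * (2 * R) ^ (n + 1)) *
            volume (ball (0 : EuclideanSpace ℝ (Fin (n + 1))) 1) := by
          rw [hvol2, ENNReal.ofReal_mul (by positivity), mul_assoc]
      _ = ENNReal.ofReal (10 ^ (2 * lam) * 8 ^ (n + 1)) *
            (ENNReal.ofReal ((t' / 2) ^ (2 * lam) * (R / 4) ^ (n + 1)) *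
              volume (ball (0 : EuclideanSpace ℝ (Fin (n + 1))) 1)) := by
          rw [hreal, ENNReal.ofReal_mul (by positivity),
            ENNReal.ofReal_mul (by positivity : (0:ℝ) ≤ 10 ^ (2 * lam)),
            ENNReal.ofReal_mul (by positivity : (0:ℝ) ≤ (t' / 2) ^ (2 * lam))]
          ring
      _ = ENNReal.ofReal (10 ^ (2 * lam) * 8 ^ (n + 1)) *
            (ENNReal.ofReal ((t' / 2) ^ (2 * lam)) * volume (ball x' (R / 4))) := by
          rw [hvol4, ENNReal.ofReal_mul (by positivity : (0:ℝ) ≤ (t' / 2) ^ (2 * lam))]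
          ring
      _ ≤ ENNReal.ofReal (10 ^ (2 * lam) * 8 ^ (n + 1)) *
            μ (ball x R ∩ {y | 0 < y (Fin.last n)}) :=
          mul_le_mul_right hlow2 _
end

section
/- Let n ≥ 0 and λ > 0. The Bessel measure dm_λ(x) := x_{n+1}^{2λ} dx and the Lebesgue measure on the half-space ℝ^{n+1}_+ := ℝ^n × (0,∞) (with the Euclidean metric) satisfy the A∞ relation: there exist ε, δ ∈ (0,1) such that for every metric ball B of ℝ^{n+1}_+ and every measurable E ⊆ B, m_λ(E) ≤ ε m_λ(B) implies |E| ≤ (1−δ)|B|, where |·| denotes Lebesgue measure. -/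
open MeasureTheory Metric ENNReal Set

/-- In Euclidean space, each coordinate difference is bounded by the distance. -/
lemma abs_coord_lt_of_mem_ball {m : ℕ} {z y : EuclideanSpace ℝ (Fin m)} {r : ℝ}
    (hy : y ∈ ball z r) (j : Fin m) : |y j - z j| < r := by
  have h1 : dist (y j) (z j) ≤ dist y z := by
    rw [EuclideanSpace.dist_eq]
    calc dist (y j) (z j) = Real.sqrt (dist (y j) (z j) ^ 2) := (Real.sqrt_sq dist_nonneg).symm
      _ ≤ _ := Real.sqrt_le_sqrt (Finset.single_le_sum
          (f := fun i => dist (y i) (z i) ^ 2) (fun i _ => sq_nonneg _) (Finset.mem_univ j))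
  rw [Real.dist_eq] at h1
  exact lt_of_le_of_lt h1 (mem_ball.mp hy)

/-- The Bessel measure `m_λ` and the Lebesgue measure on the half-space
`ℝ^{n+1}_+` satisfy the `A∞` relation. -/
theorem besselMeasure_aInfty_lebesgue (n : ℕ) (lam : ℝ) (hlam : 0 < lam) :
    ∃ ε δ : ℝ, 0 < ε ∧ ε < 1 ∧ 0 < δ ∧ δ < 1 ∧
      ∀ x : EuclideanSpace ℝ (Fin (n + 1)), 0 < x (Fin.last n) → ∀ R : ℝ, 0 < R →
        ∀ E : Set (EuclideanSpace ℝ (Fin (n + 1))), MeasurableSet E →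
          E ⊆ ball x R ∩ {y | 0 < y (Fin.last n)} →
          ((volume : Measure (EuclideanSpace ℝ (Fin (n + 1)))).withDensity
              (fun y => ENNReal.ofReal (y (Fin.last n) ^ (2 * lam)))) E ≤
            ENNReal.ofReal ε *
              ((volume : Measure (EuclideanSpace ℝ (Fin (n + 1)))).withDensity
                  (fun y => ENNReal.ofReal (y (Fin.last n) ^ (2 * lam))))
                (ball x R ∩ {y | 0 < y (Fin.last n)}) →
          volume E ≤
            ENNReal.ofReal (1 - δ) * volume (ball x R ∩ {y | 0 < y (Fin.last n)}) := by
  classical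
  set j : Fin (n + 1) := Fin.last n with hj
  have h2lam : (0:ℝ) ≤ 2 * lam := by linarith
  set B4 : ℝ := (4:ℝ) ^ (2 * lam) with hB4
  have hB4one : (1:ℝ) ≤ B4 := Real.one_le_rpow (by norm_num) h2lam
  have hB4pos : (0:ℝ) < B4 := lt_of_lt_of_le one_pos hB4one
  set δ : ℝ := 1 / (2 * B4 * 4 ^ (n + 1)) with hδ
  have hden : (1:ℝ) < 2 * B4 * 4 ^ (n + 1) := by
    have h4 : (1:ℝ) ≤ 4 ^ (n + 1) := one_le_pow₀ (by norm_num)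
    nlinarith
  have hδpos : 0 < δ := by
    rw [hδ]; positivity
  have hδlt : δ < 1 := by
    rw [hδ, div_lt_one (lt_trans one_pos hden)]; exact hden
  refine ⟨1/2, δ, by norm_num, by norm_num, hδpos, hδlt, ?_⟩
  intro x hx R hR E hE hEQ hmain
  set f : EuclideanSpace ℝ (Fin (n + 1)) → ℝ≥0∞ :=
    fun y => ENNReal.ofReal (y j ^ (2 * lam)) with hf
  set H : Set (EuclideanSpace ℝ (Fin (n + 1))) := {y | 0 < y j} with hH
  set Q : Set (EuclideanSpace ℝ (Fin (n + 1))) := ball x R ∩ H with hQdef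
  set μ := (volume : Measure (EuclideanSpace ℝ (Fin (n + 1)))).withDensity f with hμ
  set M : ℝ := x j + R with hM
  have hMpos : 0 < M := by positivity
  -- continuity / measurability facts
  have hjc : Continuous fun y : EuclideanSpace ℝ (Fin (n + 1)) => y j :=
    (EuclideanSpace.proj (𝕜 := ℝ) j).continuous
  have hfm : Measurable f :=
    (ENNReal.continuous_ofReal.comp ((Real.continuous_rpow_const h2lam).comp hjc)).measurable
  have hHm : MeasurableSet H := measurableSet_lt measurable_const hjc.measurable
  have hQm : MeasurableSet Q := measurableSet_ball.inter hHm
  -- upper bound for the density on Q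
  have hup : ∀ y ∈ Q, f y ≤ ENNReal.ofReal (M ^ (2 * lam)) := by
    rintro y ⟨hyb, hyH⟩
    have h1 : |y j - x j| < R := abs_coord_lt_of_mem_ball hyb j
    have h2 : y j ≤ M := by
      have := (abs_lt.mp h1).2; rw [hM]; linarith
    exact ENNReal.ofReal_le_ofReal
      (Real.rpow_le_rpow (le_of_lt hyH) h2 h2lam)
  -- upper bound for μ on measurable subsets of Q
  have hμup : ∀ S : Set (EuclideanSpace ℝ (Fin (n + 1))), MeasurableSet S → S ⊆ Q →
      μ S ≤ ENNReal.ofReal (M ^ (2 * lam)) * volume S := by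
    intro S hSm hSQ
    rw [hμ, withDensity_apply f hSm]
    calc ∫⁻ y in S, f y ≤ ∫⁻ _ in S, ENNReal.ofReal (M ^ (2 * lam)) :=
          setLIntegral_mono measurable_const (fun y hy => hup y (hSQ hy))
      _ = ENNReal.ofReal (M ^ (2 * lam)) * volume S := setLIntegral_const S _
  -- the auxiliary sub-ball
  set z : EuclideanSpace ℝ (Fin (n + 1)) := x + EuclideanSpace.single j (R / 2) with hz
  have hzj : z j = x j + R / 2 := by
    rw [hz, PiLp.add_apply, EuclideanSpace.single_apply, if_pos rfl]
  have hdzx : dist z x = R / 2 := by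
    rw [dist_eq_norm, hz, add_sub_cancel_left, EuclideanSpace.norm_single]
    rw [Real.norm_eq_abs, abs_of_pos (by positivity)]
  set B' : Set (EuclideanSpace ℝ (Fin (n + 1))) := ball z (R / 4) with hB'
  have hB'Q : B' ⊆ Q := by
    intro y hy
    have hcoord : |y j - z j| < R / 4 := abs_coord_lt_of_mem_ball hy j
    have hylow : x j + R / 4 < y j := by
      have := (abs_lt.mp hcoord).1; rw [hzj] at this; linarith
    constructor
    · have : dist y x ≤ dist y z + dist z x := dist_triangle y z x
      rw [hdzx] at this
      have hyz : dist y z < R / 4 := mem_ball.mp hy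
      exact mem_ball.mpr (by linarith)
    · exact lt_trans (by positivity) hylow
  -- lower bound for the density on B'
  have hlow : ∀ y ∈ B', ENNReal.ofReal ((M / 4) ^ (2 * lam)) ≤ f y := by
    intro y hy
    have hcoord : |y j - z j| < R / 4 := abs_coord_lt_of_mem_ball hy j
    have hylow : x j + R / 4 < y j := by
      have := (abs_lt.mp hcoord).1; rw [hzj] at this; linarith
    have hM4 : M / 4 ≤ y j := by rw [hM]; linarith
    exact ENNReal.ofReal_le_ofReal (Real.rpow_le_rpow (by positivity) hM4 h2lam)
  have hμB' : ENNReal.ofReal ((M / 4) ^ (2 * lam)) * volume B' ≤ μ B' := by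
    rw [hμ, withDensity_apply f measurableSet_ball]
    calc ENNReal.ofReal ((M / 4) ^ (2 * lam)) * volume B'
        = ∫⁻ _ in B', ENNReal.ofReal ((M / 4) ^ (2 * lam)) := (setLIntegral_const B' _).symm
      _ ≤ ∫⁻ y in B', f y := setLIntegral_mono hfm hlow
  -- finiteness
  have hvolQball : volume Q ≤ volume (ball x R) := measure_mono inter_subset_left
  have hμQfin : μ Q ≠ ⊤ := by
    refine ne_of_lt (lt_of_le_of_lt (hμup Q hQm subset_rfl) ?_)
    exact mul_lt_top ENNReal.ofReal_lt_top (lt_of_le_of_lt hvolQball measure_ball_lt_top)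
  -- half of μ Q is ≤ μ F for F := Q \ E
  set F : Set (EuclideanSpace ℝ (Fin (n + 1))) := Q \ E with hF
  have hFm : MeasurableSet F := hQm.diff hE
  have hsum : μ F + μ E = μ Q := by
    have := measure_diff_add_inter (μ := μ) Q hE
    rwa [inter_eq_self_of_subset_right hEQ] at this
  have hhalfQ : μ Q = ENNReal.ofReal (1/2) * μ Q + ENNReal.ofReal (1/2) * μ Q := by
    rw [← add_mul, ← ENNReal.ofReal_add (by norm_num) (by norm_num)]
    norm_num
  have hhalf : ENNReal.ofReal (1/2) * μ Q ≤ μ F := by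
    have h1 : μ F + μ E ≤ μ F + ENNReal.ofReal (1/2) * μ Q := add_le_add_right hmain _
    rw [hsum] at h1
    have h2 : ENNReal.ofReal (1/2) * μ Q + ENNReal.ofReal (1/2) * μ Q ≤
        μ F + ENNReal.ofReal (1/2) * μ Q := le_trans (le_of_eq hhalfQ.symm) h1
    exact (ENNReal.add_le_add_iff_right
      (mul_ne_top ENNReal.ofReal_ne_top hμQfin)).mp h2
  -- volumes of the balls
  set κ := volume (ball (0 : EuclideanSpace ℝ (Fin (n + 1))) 1) with hκ
  have hfr : Module.finrank ℝ (EuclideanSpace ℝ (Fin (n + 1))) = n + 1 :=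
    finrank_euclideanSpace_fin
  have hvolB' : volume B' = ENNReal.ofReal ((R / 4) ^ (n + 1)) * κ := by
    rw [hB', Measure.addHaar_ball volume z (by positivity : (0:ℝ) ≤ R / 4), hfr]
  have hvolB : volume (ball x R) = ENNReal.ofReal (R ^ (n + 1)) * κ := by
    rw [Measure.addHaar_ball volume x hR.le, hfr]
  -- the key estimate : ofReal δ * volume Q ≤ volume F
  have hkey : ENNReal.ofReal δ * volume Q ≤ volume F := by
    rw [← ENNReal.mul_le_mul_iff_right
      (a := ENNReal.ofReal (M ^ (2 * lam)))
      (ENNReal.ofReal_pos.mpr (Real.rpow_pos_of_pos hMpos _)).ne' ENNReal.ofReal_ne_top]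
    calc ENNReal.ofReal (M ^ (2 * lam)) * (ENNReal.ofReal δ * volume Q)
        ≤ ENNReal.ofReal (M ^ (2 * lam)) * (ENNReal.ofReal δ * volume (ball x R)) := by
          gcongr
      _ = ENNReal.ofReal (M ^ (2 * lam) * δ * R ^ (n + 1)) * κ := by
          rw [hvolB, ← mul_assoc, ← mul_assoc,
            ← ENNReal.ofReal_mul (by positivity), ← ENNReal.ofReal_mul (by positivity)]
      _ = ENNReal.ofReal ((1/2) * ((M / 4) ^ (2 * lam) * (R / 4) ^ (n + 1))) * κ := by
          have hB4ne : B4 ≠ 0 := hB4pos.ne'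
          have h4ne : ((4:ℝ) ^ (n + 1)) ≠ 0 := by positivity
          have hreal : M ^ (2 * lam) * δ * R ^ (n + 1) =
              (1/2) * ((M / 4) ^ (2 * lam) * (R / 4) ^ (n + 1)) := by
            rw [Real.div_rpow hMpos.le (by norm_num), div_pow, hδ, ← hB4]
            field_simp
          rw [hreal]
      _ = ENNReal.ofReal (1/2) *
            (ENNReal.ofReal ((M / 4) ^ (2 * lam)) * (ENNReal.ofReal ((R / 4) ^ (n + 1)) * κ)) := by
          rw [ENNReal.ofReal_mul (by norm_num : (0:ℝ) ≤ 1/2),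
            ENNReal.ofReal_mul (by positivity), mul_assoc, mul_assoc]
      _ = ENNReal.ofReal (1/2) * (ENNReal.ofReal ((M / 4) ^ (2 * lam)) * volume B') := by
          rw [hvolB']
      _ ≤ ENNReal.ofReal (1/2) * μ B' := by gcongr
      _ ≤ ENNReal.ofReal (1/2) * μ Q := by
          exact mul_le_mul_right (measure_mono hB'Q) _
      _ ≤ μ F := hhalf
      _ ≤ ENNReal.ofReal (M ^ (2 * lam)) * volume F :=
          hμup F hFm diff_subset
  -- conclude
  have hFb : F ⊆ ball x R := fun y hy => hy.1.1
  have hvolFfin : volume F ≠ ⊤ :=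
    ne_of_lt (lt_of_le_of_lt (measure_mono hFb) measure_ball_lt_top)
  have hvsum : volume F + volume E = volume Q := by
    have := measure_diff_add_inter (μ := (volume : Measure (EuclideanSpace ℝ (Fin (n+1))))) Q hE
    rwa [inter_eq_self_of_subset_right hEQ] at this
  have hQsplit : volume Q = ENNReal.ofReal (1 - δ) * volume Q + ENNReal.ofReal δ * volume Q := by
    rw [← add_mul, ← ENNReal.ofReal_add (by linarith) hδpos.le]
    norm_num
  have h2 : volume E + volume F ≤ ENNReal.ofReal (1 - δ) * volume Q + volume F := by
    calc volume E + volume F = volume Q := by rw [add_comm]; exact hvsum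
      _ = ENNReal.ofReal (1 - δ) * volume Q + ENNReal.ofReal δ * volume Q := hQsplit
      _ ≤ ENNReal.ofReal (1 - δ) * volume Q + volume F := add_le_add_right hkey _
  exact (ENNReal.add_le_add_iff_right hvolFfin).mp h2
end

section
/- Let (X,ρ) be a metric space, μ a Borel measure on X all of whose balls have finite positive measure, w : X → [0,∞] measurable, ν the measure with dν = w dμ, and suppose there are t ∈ (1,∞) and C₀ ≥ 1 such that (μ(B)⁻¹ ∫_B w^t dμ)^{1/t} ≤ C₀ ν(B)/μ(B) for every metric ball B (with ν(B) finite and positive). Let t' = t/(t−1), let r, p ∈ (0,∞), and let (B_j)_{j∈ℕ} be any countable family of metric balls of X. Then for every measurable function f, (∑_{j} osc_{r,ν}(f;B_j)^p)^{1/p} ≤ C₀^{1/r} (∑_{j} osc_{rt',μ}(f;B_j)^p)^{1/p}. -/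
open MeasureTheory Metric ENNReal Set

/-- Family (ℓ^p) version of the per-ball oscillation comparison under the
reverse Hölder hypothesis. -/
theorem osc_family_le_of_reverseHolder {X : Type*}
    [MetricSpace X] [MeasurableSpace X] [BorelSpace X]
    (μ : Measure X)
    (hballs : ∀ (x : X) (R : ℝ), 0 < R → 0 < μ (ball x R) ∧ μ (ball x R) < ∞)
    (w : X → ℝ≥0∞) (hw : Measurable w) (ν : Measure X) (hν : ν = μ.withDensity w)
    (t : ℝ) (ht : 1 < t) (C₀ : ℝ) (hC₀ : 1 ≤ C₀)
    (hballsν : ∀ (x : X) (R : ℝ), 0 < R → 0 < ν (ball x R) ∧ ν (ball x R) < ∞)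
    (hRH : ∀ (x : X) (R : ℝ), 0 < R →
      ((μ (ball x R))⁻¹ * ∫⁻ y in ball x R, w y ^ t ∂μ) ^ (1 / t) ≤
        ENNReal.ofReal C₀ * (ν (ball x R) / μ (ball x R)))
    (r p : ℝ) (hr : 0 < r) (hp : 0 < p)
    (x : ℕ → X) (R : ℕ → ℝ) (hR : ∀ j : ℕ, 0 < R j) :
    ∀ f : X → ℝ, Measurable f →
      (∑' j : ℕ, osc r ν (ball (x j) (R j)) f ^ p) ^ (1 / p) ≤
        ENNReal.ofReal C₀ ^ (1 / r) *
          (∑' j : ℕ, osc (r * (t / (t - 1))) μ (ball (x j) (R j)) f ^ p) ^ (1 / p) := by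
  
  intro f hf
  set t' : ℝ := t / (t - 1) with ht'
  have hpq : t.HolderConjugate t' := (Real.holderConjugate_iff_eq_conjExponent ht).2 rfl
  have ht'pos : 0 < t' := hpq.symm.pos
  have hinv : 1 / t + 1 / t' = 1 := by
    rw [one_div, one_div]; exact hpq.inv_add_inv_eq_one
  set K : ℝ≥0∞ := ENNReal.ofReal C₀ ^ (1 / r) with hK
  have hKtop : K ≠ ∞ := ENNReal.rpow_ne_top_of_nonneg (by positivity) ENNReal.ofReal_ne_top
  have hK1 : (1 : ℝ≥0∞) ≤ K := by
    rw [hK]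
    calc (1 : ℝ≥0∞) = 1 ^ (1 / r) := (ENNReal.one_rpow _).symm
      _ ≤ _ := ENNReal.rpow_le_rpow (ENNReal.one_le_ofReal.mpr hC₀) (by positivity)
  have hK0 : K ≠ 0 := (zero_lt_one.trans_le hK1).ne'
  have key : ∀ j, osc r ν (ball (x j) (R j)) f ≤ K * osc (r * t') μ (ball (x j) (R j)) f := by
    intro j
    set B := ball (x j) (R j) with hB
    have hBmeas : MeasurableSet B := measurableSet_ball
    obtain ⟨hμ0, hμtop⟩ := hballs (x j) (R j) (hR j)
    obtain ⟨hν0, hνtop⟩ := hballsν (x j) (R j) (hR j)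
    rw [osc, osc, ENNReal.mul_iInf_of_ne hK0 hKtop]
    refine le_iInf fun c => iInf_le_of_le c ?_
    set g : X → ℝ≥0∞ := fun y => ENNReal.ofReal |f y - c| with hg
    have hgm : Measurable g := (hf.sub measurable_const).abs.ennreal_ofReal
    have hgrm : Measurable fun y => g y ^ r :=
      ENNReal.continuous_rpow_const.measurable.comp hgm
    set A : ℝ≥0∞ := (μ B)⁻¹ * ∫⁻ y in B, g y ^ (r * t') ∂μ with hA
    have step1 : ∫⁻ y in B, g y ^ r ∂ν = ∫⁻ y in B, w y * g y ^ r ∂μ := by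
      rw [hν, MeasureTheory.restrict_withDensity hBmeas,
        MeasureTheory.lintegral_withDensity_eq_lintegral_mul _ hw hgrm]
      rfl
    have holder : ∫⁻ y in B, w y * g y ^ r ∂μ ≤
        (∫⁻ y in B, w y ^ t ∂μ) ^ (1 / t) * (∫⁻ y in B, g y ^ (r * t') ∂μ) ^ (1 / t') := by
      have h := ENNReal.lintegral_mul_le_Lp_mul_Lq (μ.restrict B) hpq hw.aemeasurable
        hgrm.aemeasurable
      simpa [ENNReal.rpow_mul] using h
    have hw_t1 : (∫⁻ y in B, w y ^ t ∂μ) ^ (1 / t) ≤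
        μ B ^ (1 / t) * (ENNReal.ofReal C₀ * (ν B / μ B)) := by
      have h1 : ∫⁻ y in B, w y ^ t ∂μ = μ B * ((μ B)⁻¹ * ∫⁻ y in B, w y ^ t ∂μ) := by
        rw [← mul_assoc, ENNReal.mul_inv_cancel hμ0.ne' hμtop.ne, one_mul]
      rw [h1, ENNReal.mul_rpow_of_nonneg _ _ (by positivity)]
      exact mul_le_mul_right (hRH (x j) (R j) (hR j)) _
    have hg_t2 : (∫⁻ y in B, g y ^ (r * t') ∂μ) ^ (1 / t') = μ B ^ (1 / t') * A ^ (1 / t') := by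
      rw [hA, ← ENNReal.mul_rpow_of_nonneg _ _ (by positivity), ← mul_assoc,
        ENNReal.mul_inv_cancel hμ0.ne' hμtop.ne, one_mul]
    have main : (ν B)⁻¹ * ∫⁻ y in B, g y ^ r ∂ν ≤ ENNReal.ofReal C₀ * A ^ (1 / t') := by
      calc (ν B)⁻¹ * ∫⁻ y in B, g y ^ r ∂ν
          ≤ (ν B)⁻¹ * ((μ B ^ (1 / t) * (ENNReal.ofReal C₀ * (ν B / μ B))) *
              (μ B ^ (1 / t') * A ^ (1 / t'))) := by
            refine mul_le_mul_right ?_ _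
            rw [step1]
            exact holder.trans (mul_le_mul' hw_t1 hg_t2.le)
        _ = ENNReal.ofReal C₀ * A ^ (1 / t') := by
            have h2 : μ B ^ (1 / t) * μ B ^ (1 / t') = μ B := by
              rw [← ENNReal.rpow_add _ _ hμ0.ne' hμtop.ne, hinv, ENNReal.rpow_one]
            rw [ENNReal.div_eq_inv_mul]
            have h3 : (ν B)⁻¹ * ((μ B ^ (1 / t) * (ENNReal.ofReal C₀ * ((μ B)⁻¹ * ν B))) *
                (μ B ^ (1 / t') * A ^ (1 / t'))) =
                ((ν B)⁻¹ * ν B) * ((μ B ^ (1 / t) * μ B ^ (1 / t')) * (μ B)⁻¹) *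
                  (ENNReal.ofReal C₀ * A ^ (1 / t')) := by ring
            rw [h3, h2, ENNReal.inv_mul_cancel hν0.ne' hνtop.ne,
              ENNReal.mul_inv_cancel hμ0.ne' hμtop.ne, one_mul, one_mul]
    calc ((ν B)⁻¹ * ∫⁻ y in B, g y ^ r ∂ν) ^ (1 / r)
        ≤ (ENNReal.ofReal C₀ * A ^ (1 / t')) ^ (1 / r) :=
          ENNReal.rpow_le_rpow main (by positivity)
      _ = K * A ^ (1 / (r * t')) := by
          rw [ENNReal.mul_rpow_of_nonneg _ _ (by positivity), ← ENNReal.rpow_mul,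
            one_div_mul_one_div, mul_comm t' r, hK]
  have hsum : ∑' j : ℕ, osc r ν (ball (x j) (R j)) f ^ p ≤
      K ^ p * ∑' j : ℕ, osc (r * t') μ (ball (x j) (R j)) f ^ p := by
    rw [← ENNReal.tsum_mul_left]
    refine ENNReal.tsum_le_tsum fun j => ?_
    rw [← ENNReal.mul_rpow_of_nonneg _ _ hp.le]
    exact ENNReal.rpow_le_rpow (key j) hp.le
  calc (∑' j : ℕ, osc r ν (ball (x j) (R j)) f ^ p) ^ (1 / p)
      ≤ (K ^ p * ∑' j : ℕ, osc (r * t') μ (ball (x j) (R j)) f ^ p) ^ (1 / p) :=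
        ENNReal.rpow_le_rpow hsum (by positivity)
    _ = K * (∑' j : ℕ, osc (r * t') μ (ball (x j) (R j)) f ^ p) ^ (1 / p) := by
        rw [ENNReal.mul_rpow_of_nonneg _ _ (by positivity), ← ENNReal.rpow_mul,
          mul_one_div, div_self hp.ne', ENNReal.rpow_one]
end
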